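/- Let P be a generic convex polygon with n ≥ 6 vertices and let P_1 and P_2 be the two polygons resulting from a decomposition of P whose cutting diagonal is Delaunay. Then s_-(P) ≥ s_-(P_1) + s_-(P_2) − 2. -/

import Mathlib

open EuclideanGeometry
open scoped Classical

noncomputable section

/-- The Euclidean plane. -/
abbrev Pt := EuclideanSpace ℝ (Fin 2)

/-- Signed area determinant of the triangle `a b c` (positive iff `a b c` is
counterclockwise, i.e. `c` lies strictly to the left of the directed line `a → b`). -/
def det2 (a b c : Pt) : ℝ :=
  (b 0 - a 0) * (c 1 - a 1) - (b 1 - a 1) * (c 0 - a 0)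

/-- The vertices `V 0, V 1, …, V (n-1)` (indices mod `n`) are distinct and in convex
position, listed counterclockwise: every other vertex lies strictly to the left of
each directed edge. -/
def ConvexCCW {n : ℕ} (V : ZMod n → Pt) : Prop :=
  Function.Injective V ∧
    ∀ i j : ZMod n, j ≠ i → j ≠ i + 1 → 0 < det2 (V i) (V (i + 1)) (V j)

/-- The polygon is generic: no three vertices are collinear and no four vertices lie
on a common circle. -/
def GenericPoly {n : ℕ} (V : ZMod n → Pt) : Prop :=
  (∀ i j k : ZMod n, i ≠ j → j ≠ k → i ≠ k →
      ¬ Collinear ℝ ({V i, V j, V k} : Set Pt)) ∧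
  (∀ i j k l : ZMod n, i ≠ j → i ≠ k → i ≠ l → j ≠ k → j ≠ l → k ≠ l →
      ¬ ∃ (O : Pt) (R : ℝ),
        dist (V i) O = R ∧ dist (V j) O = R ∧ dist (V k) O = R ∧ dist (V l) O = R)

/-- `O i` is the center and `R i` the radius of the circle `C i` through
`V (i-1)`, `V i`, `V (i+1)`. -/
def IsCircumData {n : ℕ} (V O : ZMod n → Pt) (R : ZMod n → ℝ) : Prop :=
  ∀ i : ZMod n,
    dist (V (i - 1)) (O i) = R i ∧ dist (V i) (O i) = R i ∧
      dist (V (i + 1)) (O i) = R i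

/-- The polygon is coherent: each circumcenter `O i` lies in the closed infinite cone
with apex `V i` spanned by the rays from `V i` through `V (i-1)` and `V (i+1)`. -/
def Coherent {n : ℕ} (V O : ZMod n → Pt) : Prop :=
  ∀ i : ZMod n, ∃ s t : ℝ, 0 ≤ s ∧ 0 ≤ t ∧
    O i - V i = s • (V (i - 1) - V i) + t • (V (i + 1) - V i)

/-- `V i` is locally maximal-extremal: `V (i-2)` and `V (i+2)` lie strictly outside `C i`. -/
def LocMax {n : ℕ} (V O : ZMod n → Pt) (R : ZMod n → ℝ) (i : ZMod n) : Prop :=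
  R i < dist (V (i - 2)) (O i) ∧ R i < dist (V (i + 2)) (O i)

/-- `V i` is locally minimal-extremal: `V (i-2)` and `V (i+2)` lie strictly inside `C i`. -/
def LocMin {n : ℕ} (V O : ZMod n → Pt) (R : ZMod n → ℝ) (i : ZMod n) : Prop :=
  dist (V (i - 2)) (O i) < R i ∧ dist (V (i + 2)) (O i) < R i

/-- `V i` is globally maximal-extremal: the open disk bounded by `C i` contains no vertex. -/
def GlobMax {n : ℕ} (V O : ZMod n → Pt) (R : ZMod n → ℝ) (i : ZMod n) : Prop :=
  ∀ j : ZMod n, R i ≤ dist (V j) (O i)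

/-- `V i` is globally minimal-extremal: the open disk bounded by `C i` contains every
vertex other than `V (i-1)`, `V i`, `V (i+1)`. -/
def GlobMin {n : ℕ} (V O : ZMod n → Pt) (R : ZMod n → ℝ) (i : ZMod n) : Prop :=
  ∀ j : ZMod n, j ≠ i - 1 → j ≠ i → j ≠ i + 1 → dist (V j) (O i) < R i

/-- `V i` is radially maximal-extremal: `R (i-1) < R i > R (i+1)`. -/
def RadMax {n : ℕ} (R : ZMod n → ℝ) (i : ZMod n) : Prop :=
  R (i - 1) < R i ∧ R (i + 1) < R i

/-- `V i` is radially minimal-extremal: `R (i-1) > R i < R (i+1)`. -/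
def RadMin {n : ℕ} (R : ZMod n → ℝ) (i : ZMod n) : Prop :=
  R i < R (i - 1) ∧ R i < R (i + 1)

end

noncomputable section

/-- The sub-polygon of `V` cut off by the diagonal from `V a` to `V (a + m)`: its
vertex sequence is `V a, V (a+1), …, V (a+m)` (so it has `m + 1` vertices and the
diagonal is one of its edges). -/
def subPolygon {n : ℕ} [NeZero n] (V : ZMod n → Pt) (a : ZMod n) (m : ℕ) :
    ZMod (m + 1) → Pt :=
  fun j => V (a + (j.val : ZMod n))

end

/-! ### Auxiliary machinery -/

noncomputable section

namespace DDGM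

/-- Power of the point `x` with respect to the circle with center `O` and radius `R`. -/
def pw (O : Pt) (R : ℝ) (x : Pt) : ℝ := (x 0 - O 0)^2 + (x 1 - O 1)^2 - R^2

lemma det2_cyc (a b c : Pt) : det2 a b c = det2 b c a := by unfold det2; ring

lemma det2_swap (a b c : Pt) : det2 a b c = - det2 a c b := by unfold det2; ring

lemma pluecker (P A X Y Z : Pt) :
    det2 P A Y * det2 P X Z = det2 P A X * det2 P Y Z + det2 P A Z * det2 P X Y := by
  unfold det2; ring

lemma affdep (A B W X O₁ O₂ : Pt) (R₁ R₂ : ℝ) :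
    det2 B W X * (pw O₁ R₁ A - pw O₂ R₂ A) - det2 A W X * (pw O₁ R₁ B - pw O₂ R₂ B)
      + det2 A B X * (pw O₁ R₁ W - pw O₂ R₂ W)
      - det2 A B W * (pw O₁ R₁ X - pw O₂ R₂ X) = 0 := by
  unfold det2 pw; ring

lemma dist_sq (x y : Pt) : dist x y ^ 2 = (x 0 - y 0)^2 + (x 1 - y 1)^2 := by
  rw [EuclideanSpace.dist_eq, Real.sq_sqrt (by positivity)]
  rw [Fin.sum_univ_two]
  simp [Real.dist_eq, sq_abs]

lemma pw_nonneg_of_le {O x : Pt} {R : ℝ} (hR : 0 ≤ R) (h : R ≤ dist x O) :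
    0 ≤ pw O R x := by
  have h2 : R ^ 2 ≤ dist x O ^ 2 := by nlinarith [dist_nonneg (x := x) (y := O)]
  have := dist_sq x O
  unfold pw; nlinarith

lemma le_dist_of_pw_nonneg {O x : Pt} {R : ℝ} (hR : 0 ≤ R) (h : 0 ≤ pw O R x) :
    R ≤ dist x O := by
  have := dist_sq x O
  unfold pw at h
  nlinarith [dist_nonneg (x := x) (y := O)]

lemma pw_eq_zero_of_dist {O x : Pt} {R : ℝ} (h : dist x O = R) : pw O R x = 0 := by
  have h2 : (x 0 - O 0)^2 + (x 1 - O 1)^2 = R^2 := by rw [← dist_sq, h]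
  unfold pw; linarith

lemma dist_eq_of_pw_zero {O x : Pt} {R : ℝ} (hR : 0 ≤ R) (h : pw O R x = 0) :
    dist x O = R := by
  have := dist_sq x O
  unfold pw at h
  nlinarith [dist_nonneg (x := x) (y := O)]

lemma circ_unique {x y z O O' : Pt} {R R' : ℝ} (hdet : det2 x y z ≠ 0)
    (h1 : dist x O = R) (h2 : dist y O = R) (h3 : dist z O = R)
    (h4 : dist x O' = R') (h5 : dist y O' = R') (h6 : dist z O' = R') :
    O = O' ∧ R = R' := by
  have e1 : (x 0 - O 0)^2 + (x 1 - O 1)^2 = R^2 := by rw [← dist_sq, h1]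
  have e2 : (y 0 - O 0)^2 + (y 1 - O 1)^2 = R^2 := by rw [← dist_sq, h2]
  have e3 : (z 0 - O 0)^2 + (z 1 - O 1)^2 = R^2 := by rw [← dist_sq, h3]
  have f1 : (x 0 - O' 0)^2 + (x 1 - O' 1)^2 = R'^2 := by rw [← dist_sq, h4]
  have f2 : (y 0 - O' 0)^2 + (y 1 - O' 1)^2 = R'^2 := by rw [← dist_sq, h5]
  have f3 : (z 0 - O' 0)^2 + (z 1 - O' 1)^2 = R'^2 := by rw [← dist_sq, h6]
  have l1 : 2*(O 0 - O' 0)*(y 0 - x 0) + 2*(O 1 - O' 1)*(y 1 - x 1) = 0 := by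
    linear_combination e1 - e2 - f1 + f2
  have l2 : 2*(O 0 - O' 0)*(z 0 - x 0) + 2*(O 1 - O' 1)*(z 1 - x 1) = 0 := by
    linear_combination e1 - e3 - f1 + f3
  have hd : (y 0 - x 0) * (z 1 - x 1) - (y 1 - x 1) * (z 0 - x 0) ≠ 0 := hdet
  have k0 : (O 0 - O' 0) * ((y 0 - x 0) * (z 1 - x 1) - (y 1 - x 1) * (z 0 - x 0)) = 0 := by
    linear_combination ((z 1 - x 1)/2) * l1 - ((y 1 - x 1)/2) * l2
  have k1 : (O 1 - O' 1) * ((y 0 - x 0) * (z 1 - x 1) - (y 1 - x 1) * (z 0 - x 0)) = 0 := by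
    linear_combination ((y 0 - x 0)/2) * l2 - ((z 0 - x 0)/2) * l1
  have hO0 : O 0 = O' 0 := by
    rcases mul_eq_zero.1 k0 with h | h
    · linarith
    · exact absurd h hd
  have hO1 : O 1 = O' 1 := by
    rcases mul_eq_zero.1 k1 with h | h
    · linarith
    · exact absurd h hd
  have hO : O = O' := by
    ext i
    fin_cases i <;> assumption
  exact ⟨hO, by rw [← h1, ← h4, hO]⟩

/-- Key lemma A: transfer of emptiness across a Delaunay diagonal. -/
lemma keyA {A B W X Oc Od : Pt} {Rc Rd : ℝ}
    (d1 : 0 < det2 A W B) (d2 : 0 < det2 W B X) (d3 : 0 < det2 A W X)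
    (d4 : 0 < det2 A B X)
    (hCA : 0 ≤ pw Oc Rc A) (hCB : 0 ≤ pw Oc Rc B) (hCW : pw Oc Rc W = 0)
    (hDA : pw Od Rd A = 0) (hDB : pw Od Rd B = 0) (hDW : 0 ≤ pw Od Rd W)
    (hDX : 0 ≤ pw Od Rd X) :
    0 ≤ pw Oc Rc X := by
  have hid := affdep A B W X Oc Od Rc Rd
  have sBWX : det2 B W X = - det2 W B X := by unfold det2; ring
  have sABW : det2 A B W = - det2 A W B := det2_swap A B W
  rw [sBWX, sABW, hDA, hDB, hCW] at hid
  have hprod : 0 ≤ det2 A W B * (pw Oc Rc X - pw Od Rd X) := by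
    nlinarith [mul_nonneg d2.le hCA, mul_nonneg d3.le hCB, mul_nonneg d4.le hDW]
  have hg : 0 ≤ pw Oc Rc X - pw Od Rd X := by
    by_contra hneg
    push_neg at hneg
    nlinarith
  linarith

/-- Key lemma B: rigidity at the endpoints of the diagonal. -/
lemma keyB {A B W X O₀ Oₘ : Pt} {R₀ Rₘ : ℝ}
    (hd : 0 < det2 A B W * det2 A B X)
    (h0A : pw O₀ R₀ A = 0) (h0B : pw O₀ R₀ B = 0)
    (hmA : pw Oₘ Rₘ A = 0) (hmB : pw Oₘ Rₘ B = 0)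
    (h0W : 0 ≤ pw O₀ R₀ W) (hmW : pw Oₘ Rₘ W = 0)
    (h0X : pw O₀ R₀ X = 0) (hmX : 0 ≤ pw Oₘ Rₘ X) :
    pw O₀ R₀ W = 0 ∧ pw Oₘ Rₘ X = 0 := by
  have hid := affdep A B W X O₀ Oₘ R₀ Rₘ
  rw [h0A, h0B, hmA, hmB, hmW, h0X] at hid
  have hrel : det2 A B X * pw O₀ R₀ W + det2 A B W * pw Oₘ Rₘ X = 0 := by linarith
  have hW : pw O₀ R₀ W = 0 := by
    by_contra h
    have hWpos : 0 < pw O₀ R₀ W := lt_of_le_of_ne h0W (Ne.symm h)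
    have hq : det2 A B W * det2 A B X * pw O₀ R₀ W
        + det2 A B W * det2 A B W * pw Oₘ Rₘ X = 0 := by
      linear_combination (det2 A B W) * hrel
    nlinarith [mul_nonneg (mul_self_nonneg (det2 A B W)) hmX, mul_pos hd hWpos]
  have hX : pw Oₘ Rₘ X = 0 := by
    by_contra h
    have hXpos : 0 < pw Oₘ Rₘ X := lt_of_le_of_ne hmX (Ne.symm h)
    have hq : det2 A B X * det2 A B X * pw O₀ R₀ W
        + det2 A B W * det2 A B X * pw Oₘ Rₘ X = 0 := by
      linear_combination (det2 A B X) * hrel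
    nlinarith [mul_nonneg (mul_self_nonneg (det2 A B X)) h0W, mul_pos hd hXpos]
  exact ⟨hW, hX⟩

section Triples

variable {n : ℕ} [NeZero n] {V : ZMod n → Pt}

omit [NeZero n] in
lemma natCast_ne_zero' {x : ℕ} (h1 : x ≠ 0) (h2 : x < n) : (x : ZMod n) ≠ 0 := by
  have hn : NeZero n := ⟨by omega⟩
  intro h
  have := congrArg ZMod.val h
  rw [ZMod.val_cast_of_lt h2, ZMod.val_zero] at this
  exact h1 this

omit [NeZero n] in
lemma cast_add_ne (p : ZMod n) {s t : ℕ} (hs : s < n) (ht : t < n) (h : s ≠ t) :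
    p + (s : ZMod n) ≠ p + (t : ZMod n) := by
  have hn : NeZero n := ⟨by omega⟩
  intro he
  apply h
  have h2 : (s : ZMod n) = (t : ZMod n) := add_left_cancel he
  have := congrArg ZMod.val h2
  rwa [ZMod.val_cast_of_lt hs, ZMod.val_cast_of_lt ht] at this

/-- Base case: third point vs an edge starting at `q`. -/
lemma edge_pos (hconv : ConvexCCW V) (q : ZMod n) {j : ℕ} (h2 : 2 ≤ j) (hj : j ≤ n - 1) :
    0 < det2 (V q) (V (q + 1)) (V (q + (j : ℕ))) := by
  have hn : 3 ≤ n := by omega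
  have hjn : j < n := by omega
  apply hconv.2 q
  · have := cast_add_ne q (t := 0) hjn (by omega) (by omega)
    simpa using this
  · have := cast_add_ne q (t := 1) hjn (by omega) (by omega)
    simpa using this

/-- Consecutive triple seen from `p`. -/
lemma consec_pos (hconv : ConvexCCW V) (p : ZMod n) {t : ℕ} (ht1 : 1 ≤ t)
    (ht : t + 1 ≤ n - 1) :
    0 < det2 (V p) (V (p + (t : ℕ))) (V (p + ((t + 1 : ℕ) : ZMod n))) := by
  have hn : 3 ≤ n := by omega
  rw [det2_cyc]
  have he : (p + (t : ZMod n)) + 1 = p + ((t + 1 : ℕ) : ZMod n) := by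
    push_cast; ring
  rw [← he]
  apply hconv.2 (p + (t : ZMod n)) p
  · intro hh
    exact natCast_ne_zero' (n := n) (by omega) (by omega) (left_eq_add.mp hh)
  · rw [he]
    intro hh
    exact natCast_ne_zero' (n := n) (x := t + 1) (by omega) (by omega)
      (left_eq_add.mp hh)

lemma triples (hconv : ConvexCCW V) (p : ZMod n) :
    ∀ t s : ℕ, 1 ≤ s → s < t → t ≤ n - 1 →
      0 < det2 (V p) (V (p + (s : ℕ))) (V (p + (t : ℕ))) := by
  intro t
  induction t with
  | zero => intro s _ h _; omega
  | succ t ih =>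
    intro s hs1 hst ht
    rcases eq_or_lt_of_le (Nat.lt_succ_iff.mp hst) with rfl | hlt
    · exact consec_pos hconv p hs1 ht
    · rcases eq_or_lt_of_le hs1 with rfl | hs2
      · have := edge_pos hconv p (j := t + 1) (by omega) ht
        simpa using this
      · have aY : 0 < det2 (V p) (V (p + 1)) (V (p + (t : ℕ))) := by
          have := edge_pos hconv p (j := t) (by omega) (by omega)
          simpa using this
        have aX : 0 < det2 (V p) (V (p + 1)) (V (p + (s : ℕ))) := by
          have := edge_pos hconv p (j := s) (by omega) (by omega)
          simpa using this
        have aZ : 0 < det2 (V p) (V (p + 1)) (V (p + ((t + 1 : ℕ) : ZMod n))) := by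
          have := edge_pos hconv p (j := t + 1) (by omega) ht
          simpa using this
        have hYZ : 0 < det2 (V p) (V (p + (t : ℕ))) (V (p + ((t + 1 : ℕ) : ZMod n))) :=
          consec_pos hconv p (by omega) ht
        have hXY : 0 < det2 (V p) (V (p + (s : ℕ))) (V (p + (t : ℕ))) :=
          ih s hs1 hlt (by omega)
        have hpl := pluecker (V p) (V (p + 1)) (V (p + (s : ℕ)))
          (V (p + (t : ℕ))) (V (p + ((t + 1 : ℕ) : ZMod n)))
        by_contra hng
        push_neg at hng
        nlinarith [mul_pos aX hYZ, mul_pos aZ hXY, mul_nonneg aY.le (neg_nonneg.2 hng)]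

/-- All counterclockwise triples of a convex polygon are positively oriented. -/
lemma triples3 (hconv : ConvexCCW V) (p : ZMod n) {s t u : ℕ}
    (hst : s < t) (htu : t < u) (hu : u ≤ n - 1) :
    0 < det2 (V (p + (s : ℕ))) (V (p + (t : ℕ))) (V (p + (u : ℕ))) := by
  have h1 : p + ((t : ℕ) : ZMod n) = (p + (s : ℕ)) + ((t - s : ℕ) : ZMod n) := by
    push_cast [Nat.cast_sub hst.le]; ring
  have h2 : p + ((u : ℕ) : ZMod n) = (p + (s : ℕ)) + ((u - s : ℕ) : ZMod n) := by
    push_cast [Nat.cast_sub (le_of_lt (hst.trans htu))]; ring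
  rw [h1, h2]
  exact triples hconv (p + (s : ℕ)) (u - s) (t - s) (by omega) (by omega) (by omega)

end Triples

end DDGM

end

noncomputable section

namespace DDGM

variable {n : ℕ} [NeZero n] {V : ZMod n → Pt}

lemma subPolygon_apply {m : ℕ} (a : ZMod n) (j : ZMod (m+1)) :
    subPolygon V a m j = V (a + ((j.val : ℕ) : ZMod n)) := rfl

lemma cast_val_eq {m t : ℕ} (ht : t < m + 1) : ((t : ZMod (m+1))).val = t :=
  ZMod.val_cast_of_lt ht

lemma val_bounds {m : ℕ} {k : ZMod (m+1)} (h0 : k ≠ 0)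
    (hm : k ≠ ((m : ℕ) : ZMod (m+1))) : 1 ≤ k.val ∧ k.val ≤ m - 1 := by
  have hlt := ZMod.val_lt k
  have hke : (((k.val : ℕ)) : ZMod (m+1)) = k := ZMod.natCast_rightInverse k
  have hne0 : k.val ≠ 0 := by
    intro h
    apply h0
    rw [← hke, h]
    simp
  have hnem : k.val ≠ m := by
    intro h
    apply hm
    rw [← hke, h]
  omega

/-- Interior globally-maximal vertices of a sub-polygon cut off by a Delaunay
diagonal are globally maximal in the whole polygon. -/
lemma liftGlob (hconv : ConvexCCW V)
    {m : ℕ} (hm3 : 3 ≤ m) (hmn : m + 3 ≤ n)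
    {c : ZMod n} {O' : ZMod (m+1) → Pt} {R' : ZMod (m+1) → ℝ}
    (hc' : IsCircumData (subPolygon V c m) O' R')
    {Oc : Pt} {Rc : ℝ} (hdA : dist (V c) Oc = Rc)
    (hdB : dist (V (c + ((m : ℕ) : ZMod n))) Oc = Rc)
    (hdall : ∀ j : ZMod n, Rc ≤ dist (V j) Oc)
    {O : ZMod n → Pt} {R : ZMod n → ℝ} (hcirc : IsCircumData V O R)
    {k : ZMod (m+1)} (hk : GlobMax (subPolygon V c m) O' R' k)
    (hk0 : k ≠ 0) (hkm : k ≠ ((m : ℕ) : ZMod (m+1))) :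
    GlobMax V O R (c + ((k.val : ℕ) : ZMod n)) := by
  obtain ⟨hs1, hsm⟩ := val_bounds hk0 hkm
  set s := k.val with hsdef
  have hslt : s < m + 1 := ZMod.val_lt k
  have hksval : k = ((s : ℕ) : ZMod (m+1)) := (ZMod.natCast_rightInverse k).symm
  -- the three circle points of `C = (O' k, R' k)`
  obtain ⟨hp1, hp2, hp3⟩ := hc' k
  have ek1 : k - 1 = (((s - 1 : ℕ)) : ZMod (m+1)) := by
    rw [hksval, Nat.cast_sub hs1]; push_cast; ring
  have ek2 : k + 1 = (((s + 1 : ℕ)) : ZMod (m+1)) := by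
    rw [hksval]; push_cast; ring
  rw [ek1, subPolygon_apply, cast_val_eq (by omega)] at hp1
  rw [subPolygon_apply] at hp2
  rw [ek2, subPolygon_apply, cast_val_eq (by omega)] at hp3
  -- the same three points determine `(O i, R i)` with `i = c + s`
  obtain ⟨hq1, hq2, hq3⟩ := hcirc (c + ((s : ℕ) : ZMod n))
  have ei1 : c + ((s : ℕ) : ZMod n) - 1 = c + ((s - 1 : ℕ) : ZMod n) := by
    rw [Nat.cast_sub hs1]; push_cast; ring
  have ei2 : c + ((s : ℕ) : ZMod n) + 1 = c + ((s + 1 : ℕ) : ZMod n) := by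
    push_cast; ring
  rw [ei1] at hq1
  rw [ei2] at hq3
  have htri0 : 0 < det2 (V (c + ((s - 1 : ℕ) : ZMod n))) (V (c + ((s : ℕ) : ZMod n)))
      (V (c + ((s + 1 : ℕ) : ZMod n))) :=
    triples3 hconv c (by omega) (by omega) (by omega)
  obtain ⟨hOeq, hReq⟩ := circ_unique htri0.ne' hq1 hq2 hq3 hp1 hp2 hp3
  have hR'nn : 0 ≤ R' k := hp2 ▸ dist_nonneg
  have hRcnn : 0 ≤ Rc := hdA ▸ dist_nonneg
  intro j
  rw [hOeq, hReq]
  set t := (j - c).val with htdef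
  have hjt : j = c + ((t : ℕ) : ZMod n) := by
    rw [show ((t : ℕ) : ZMod n) = j - c from ZMod.natCast_rightInverse (j - c)]
    ring
  have htlt : t < n := ZMod.val_lt _
  rw [hjt]
  by_cases hcase : t ≤ m
  · -- a vertex of the sub-polygon
    have h := hk ((t : ℕ) : ZMod (m+1))
    rwa [subPolygon_apply, cast_val_eq (by omega)] at h
  · -- a vertex on the other side of the diagonal
    push_neg at hcase
    have d1 : 0 < det2 (V (c + ((0 : ℕ) : ZMod n))) (V (c + ((s : ℕ) : ZMod n)))
        (V (c + ((m : ℕ) : ZMod n))) := triples3 hconv c (by omega) (by omega) (by omega)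
    have d2 : 0 < det2 (V (c + ((s : ℕ) : ZMod n))) (V (c + ((m : ℕ) : ZMod n)))
        (V (c + ((t : ℕ) : ZMod n))) := triples3 hconv c (by omega) (by omega) (by omega)
    have d3 : 0 < det2 (V (c + ((0 : ℕ) : ZMod n))) (V (c + ((s : ℕ) : ZMod n)))
        (V (c + ((t : ℕ) : ZMod n))) := triples3 hconv c (by omega) (by omega) (by omega)
    have d4 : 0 < det2 (V (c + ((0 : ℕ) : ZMod n))) (V (c + ((m : ℕ) : ZMod n)))
        (V (c + ((t : ℕ) : ZMod n))) := triples3 hconv c (by omega) (by omega) (by omega)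
    have hVc : V (c + ((0 : ℕ) : ZMod n)) = V c := by norm_num
    have hCA : 0 ≤ pw (O' k) (R' k) (V (c + ((0 : ℕ) : ZMod n))) := by
      have h := hk 0
      rw [subPolygon_apply, ZMod.val_zero] at h
      exact pw_nonneg_of_le hR'nn h
    have hCB : 0 ≤ pw (O' k) (R' k) (V (c + ((m : ℕ) : ZMod n))) := by
      have h := hk ((m : ℕ) : ZMod (m+1))
      rw [subPolygon_apply, cast_val_eq (by omega)] at h
      exact pw_nonneg_of_le hR'nn h
    have hCW : pw (O' k) (R' k) (V (c + ((s : ℕ) : ZMod n))) = 0 :=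
      pw_eq_zero_of_dist hp2
    have hDA : pw Oc Rc (V (c + ((0 : ℕ) : ZMod n))) = 0 :=
      pw_eq_zero_of_dist (by rw [hVc]; exact hdA)
    have hDB : pw Oc Rc (V (c + ((m : ℕ) : ZMod n))) = 0 := pw_eq_zero_of_dist hdB
    have hDW : 0 ≤ pw Oc Rc (V (c + ((s : ℕ) : ZMod n))) :=
      pw_nonneg_of_le hRcnn (hdall _)
    have hDX : 0 ≤ pw Oc Rc (V (c + ((t : ℕ) : ZMod n))) :=
      pw_nonneg_of_le hRcnn (hdall _)
    exact le_dist_of_pw_nonneg hR'nn (keyA d1 d2 d3 d4 hCA hCB hCW hDA hDB hDW hDX)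

/-- At most one endpoint of the cutting diagonal can be globally maximal in a
sub-polygon (for a generic polygon). -/
lemma endpoint_excl (hconv : ConvexCCW V) (hgen : GenericPoly V)
    {m : ℕ} (hm3 : 3 ≤ m) (hmn : m + 3 ≤ n)
    {c : ZMod n} {O' : ZMod (m+1) → Pt} {R' : ZMod (m+1) → ℝ}
    (hc' : IsCircumData (subPolygon V c m) O' R') :
    ¬ (GlobMax (subPolygon V c m) O' R' 0 ∧
        GlobMax (subPolygon V c m) O' R' ((m : ℕ) : ZMod (m+1))) := by
  rintro ⟨hg0, hgm⟩
  have hz : ((m : ℕ) : ZMod (m+1)) + 1 = 0 := by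
    have h := ZMod.natCast_self (m+1)
    push_cast at h
    linear_combination h
  obtain ⟨ha1, ha2, ha3⟩ := hc' 0
  have e01 : (0 : ZMod (m+1)) - 1 = ((m : ℕ) : ZMod (m+1)) := by
    linear_combination - hz
  rw [e01, subPolygon_apply, cast_val_eq (by omega)] at ha1
  rw [subPolygon_apply, ZMod.val_zero] at ha2
  rw [zero_add, show (1 : ZMod (m+1)) = ((1 : ℕ) : ZMod (m+1)) by norm_num,
    subPolygon_apply, cast_val_eq (by omega)] at ha3
  obtain ⟨hb1, hb2, hb3⟩ := hc' ((m : ℕ) : ZMod (m+1))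
  rw [show ((m : ℕ) : ZMod (m+1)) - 1 = ((m - 1 : ℕ) : ZMod (m+1)) by
      rw [Nat.cast_sub (by omega)]; push_cast; ring,
    subPolygon_apply, cast_val_eq (by omega)] at hb1
  rw [subPolygon_apply, cast_val_eq (by omega)] at hb2
  rw [hz, subPolygon_apply, ZMod.val_zero] at hb3
  have hR0 : 0 ≤ R' 0 := ha2 ▸ dist_nonneg
  have hRm : 0 ≤ R' ((m : ℕ) : ZMod (m+1)) := hb2 ▸ dist_nonneg
  have p1 : 0 < det2 (V (c + ((0 : ℕ) : ZMod n))) (V (c + ((m - 1 : ℕ) : ZMod n)))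
      (V (c + ((m : ℕ) : ZMod n))) := triples3 hconv c (by omega) (by omega) (by omega)
  have p2 : 0 < det2 (V (c + ((0 : ℕ) : ZMod n))) (V (c + ((1 : ℕ) : ZMod n)))
      (V (c + ((m : ℕ) : ZMod n))) := triples3 hconv c (by omega) (by omega) (by omega)
  have hd : 0 < det2 (V (c + ((0 : ℕ) : ZMod n))) (V (c + ((m : ℕ) : ZMod n)))
        (V (c + ((m - 1 : ℕ) : ZMod n))) *
      det2 (V (c + ((0 : ℕ) : ZMod n))) (V (c + ((m : ℕ) : ZMod n)))
        (V (c + ((1 : ℕ) : ZMod n))) := by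
    rw [det2_swap (V (c + ((0 : ℕ) : ZMod n))) (V (c + ((m : ℕ) : ZMod n)))
        (V (c + ((m - 1 : ℕ) : ZMod n))),
      det2_swap (V (c + ((0 : ℕ) : ZMod n))) (V (c + ((m : ℕ) : ZMod n)))
        (V (c + ((1 : ℕ) : ZMod n))), neg_mul_neg]
    exact mul_pos p1 p2
  have h0W : 0 ≤ pw (O' 0) (R' 0) (V (c + ((m - 1 : ℕ) : ZMod n))) := by
    have h := hg0 ((m - 1 : ℕ) : ZMod (m+1))
    rw [subPolygon_apply, cast_val_eq (by omega)] at h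
    exact pw_nonneg_of_le hR0 h
  have hmX : 0 ≤ pw (O' ((m : ℕ) : ZMod (m+1))) (R' ((m : ℕ) : ZMod (m+1)))
      (V (c + ((1 : ℕ) : ZMod n))) := by
    have h := hgm ((1 : ℕ) : ZMod (m+1))
    rw [subPolygon_apply, cast_val_eq (by omega)] at h
    exact pw_nonneg_of_le hRm h
  obtain ⟨hw0, -⟩ := keyB hd (pw_eq_zero_of_dist ha2) (pw_eq_zero_of_dist ha1)
    (pw_eq_zero_of_dist hb3) (pw_eq_zero_of_dist hb2) h0W
    (pw_eq_zero_of_dist hb1) (pw_eq_zero_of_dist ha3) hmX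
  have hWdist : dist (V (c + ((m - 1 : ℕ) : ZMod n))) (O' 0) = R' 0 :=
    dist_eq_of_pw_zero hR0 hw0
  exact hgen.2 (c + ((0 : ℕ) : ZMod n)) (c + ((m : ℕ) : ZMod n))
    (c + ((1 : ℕ) : ZMod n)) (c + ((m - 1 : ℕ) : ZMod n))
    (cast_add_ne c (by omega) (by omega) (by omega))
    (cast_add_ne c (by omega) (by omega) (by omega))
    (cast_add_ne c (by omega) (by omega) (by omega))
    (cast_add_ne c (by omega) (by omega) (by omega))
    (cast_add_ne c (by omega) (by omega) (by omega))
    (cast_add_ne c (by omega) (by omega) (by omega))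
    ⟨O' 0, R' 0, ha2, ha1, ha3, hWdist⟩

end DDGM

end

/-- Decomposing a generic convex polygon with `n ≥ 6` vertices along a Delaunay
diagonal (some circle through the endpoints `V a` and `V (a+m)` of the diagonal has
no vertex of `P` in its open disk) satisfies `s₋(P) ≥ s₋(P₁) + s₋(P₂) - 2`. -/
theorem decomposition_delaunay_global_max
    (n : ℕ) [NeZero n] (hn : 6 ≤ n)
    (V O : ZMod n → Pt) (R : ZMod n → ℝ)
    (hconv : ConvexCCW V) (hgen : GenericPoly V) (hcirc : IsCircumData V O R)
    (a : ZMod n) (m : ℕ) (hm3 : 3 ≤ m) (hmn : m ≤ n - 3)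
    (hdel : ∃ (Oc : Pt) (Rc : ℝ), dist (V a) Oc = Rc ∧
      dist (V (a + (m : ZMod n))) Oc = Rc ∧ ∀ j : ZMod n, Rc ≤ dist (V j) Oc)
    (O1 : ZMod (m + 1) → Pt) (R1 : ZMod (m + 1) → ℝ)
    (hc1 : IsCircumData (subPolygon V a m) O1 R1)
    (O2 : ZMod (n - m + 1) → Pt) (R2 : ZMod (n - m + 1) → ℝ)
    (hc2 : IsCircumData (subPolygon V (a + (m : ZMod n)) (n - m)) O2 R2) :
    {k : ZMod (m + 1) | GlobMax (subPolygon V a m) O1 R1 k}.ncard +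
      {k : ZMod (n - m + 1) |
        GlobMax (subPolygon V (a + (m : ZMod n)) (n - m)) O2 R2 k}.ncard ≤
    {k : ZMod n | GlobMax V O R k}.ncard + 2 := by
  classical
  obtain ⟨Oc, Rc, hdA, hdB, hdall⟩ := hdel
  have hmn' : m + 3 ≤ n := by omega
  set b := a + (m : ZMod n) with hbdef
  set S : Set (ZMod n) := {k | GlobMax V O R k} with hSdef
  set S1 : Set (ZMod (m + 1)) := {k | GlobMax (subPolygon V a m) O1 R1 k} with hS1def
  set S2 : Set (ZMod (n - m + 1)) := {k | GlobMax (subPolygon V b (n - m)) O2 R2 k}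
    with hS2def
  set E1 : Set (ZMod (m + 1)) := {0, ((m : ℕ) : ZMod (m + 1))} with hE1def
  set E2 : Set (ZMod (n - m + 1)) := {0, ((n - m : ℕ) : ZMod (n - m + 1))} with hE2def
  -- the Delaunay circle viewed from the second sub-polygon
  have hdB2 : dist (V (b + ((n - m : ℕ) : ZMod n))) Oc = Rc := by
    have he : b + ((n - m : ℕ) : ZMod n) = a := by
      rw [hbdef]
      have h0 : ((m : ℕ) : ZMod n) + ((n - m : ℕ) : ZMod n) = 0 := by
        rw [← Nat.cast_add, show m + (n - m) = n by omega, ZMod.natCast_self]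
      rw [add_assoc, h0, add_zero]
    rw [he]; exact hdA
  -- endpoint exclusion
  have hB1 : ¬ ((0 : ZMod (m + 1)) ∈ S1 ∧ ((m : ℕ) : ZMod (m + 1)) ∈ S1) := by
    intro ⟨h1, h2⟩
    exact DDGM.endpoint_excl hconv hgen hm3 hmn' hc1 ⟨h1, h2⟩
  have hB2 : ¬ ((0 : ZMod (n - m + 1)) ∈ S2 ∧
      ((n - m : ℕ) : ZMod (n - m + 1)) ∈ S2) := by
    intro ⟨h1, h2⟩
    exact DDGM.endpoint_excl hconv hgen (show 3 ≤ n - m by omega)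
      (show (n - m) + 3 ≤ n by omega) hc2 ⟨h1, h2⟩
  -- lifting maps
  set f1 : ZMod (m + 1) → ZMod n := fun k => a + ((k.val : ℕ) : ZMod n) with hf1def
  set f2 : ZMod (n - m + 1) → ZMod n := fun k => b + ((k.val : ℕ) : ZMod n) with hf2def
  set T1 : Set (ZMod n) := f1 '' (S1 \ E1) with hT1def
  set T2 : Set (ZMod n) := f2 '' (S2 \ E2) with hT2def
  have hmem1 : ∀ k ∈ S1 \ E1, k ≠ 0 ∧ k ≠ ((m : ℕ) : ZMod (m + 1)) := by
    rintro k ⟨-, hkE⟩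
    simp only [hE1def, Set.mem_insert_iff, Set.mem_singleton_iff, not_or] at hkE
    exact hkE
  have hmem2 : ∀ k ∈ S2 \ E2, k ≠ 0 ∧ k ≠ ((n - m : ℕ) : ZMod (n - m + 1)) := by
    rintro k ⟨-, hkE⟩
    simp only [hE2def, Set.mem_insert_iff, Set.mem_singleton_iff, not_or] at hkE
    exact hkE
  have hT1S : T1 ⊆ S := by
    rintro x ⟨k, hkmem, rfl⟩
    obtain ⟨hk0, hkm⟩ := hmem1 k hkmem
    exact DDGM.liftGlob hconv hm3 hmn' hc1 hdA hdB hdall hcirc hkmem.1 hk0 hkm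
  have hT2S : T2 ⊆ S := by
    rintro x ⟨k, hkmem, rfl⟩
    obtain ⟨hk0, hkm⟩ := hmem2 k hkmem
    exact DDGM.liftGlob hconv (show 3 ≤ n - m by omega) (show (n - m) + 3 ≤ n by omega)
      hc2 hdB hdB2 hdall hcirc hkmem.1 hk0 hkm
  have hinj1 : Set.InjOn f1 (S1 \ E1) := by
    intro x _ y _ h
    have h2 : ((x.val : ℕ) : ZMod n) = ((y.val : ℕ) : ZMod n) := by
      simp only [hf1def] at h
      exact add_left_cancel h
    have h3 := congrArg ZMod.val h2
    rw [ZMod.val_cast_of_lt (lt_of_lt_of_le (ZMod.val_lt x) (by omega)),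
      ZMod.val_cast_of_lt (lt_of_lt_of_le (ZMod.val_lt y) (by omega))] at h3
    rw [← ZMod.natCast_rightInverse x, ← ZMod.natCast_rightInverse y, h3]
  have hinj2 : Set.InjOn f2 (S2 \ E2) := by
    intro x _ y _ h
    have h2 : ((x.val : ℕ) : ZMod n) = ((y.val : ℕ) : ZMod n) := by
      simp only [hf2def] at h
      exact add_left_cancel h
    have h3 := congrArg ZMod.val h2
    rw [ZMod.val_cast_of_lt (lt_of_lt_of_le (ZMod.val_lt x) (by omega)),
      ZMod.val_cast_of_lt (lt_of_lt_of_le (ZMod.val_lt y) (by omega))] at h3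
    rw [← ZMod.natCast_rightInverse x, ← ZMod.natCast_rightInverse y, h3]
  have hdisj : Disjoint T1 T2 := by
    rw [Set.disjoint_left]
    rintro x ⟨k, hkmem, rfl⟩ ⟨k', hk'mem, heq⟩
    obtain ⟨hb1, hb1'⟩ := DDGM.val_bounds (hmem1 k hkmem).1 (hmem1 k hkmem).2
    obtain ⟨hb2, hb2'⟩ := DDGM.val_bounds (hmem2 k' hk'mem).1 (hmem2 k' hk'mem).2
    have heq' : b + ((k'.val : ℕ) : ZMod n) = a + ((k.val : ℕ) : ZMod n) := heq
    have h2 : a + ((m + k'.val : ℕ) : ZMod n) = a + ((k.val : ℕ) : ZMod n) := by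
      rw [← heq', hbdef]
      push_cast
      ring
    have h3 := congrArg ZMod.val (add_left_cancel h2)
    rw [ZMod.val_cast_of_lt (show m + k'.val < n by omega),
      ZMod.val_cast_of_lt (show k.val < n by omega)] at h3
    omega
  -- cardinality bookkeeping
  have hcap1 : (S1 ∩ E1).ncard ≤ 1 := by
    by_cases h0 : (0 : ZMod (m + 1)) ∈ S1
    · refine le_trans (Set.ncard_le_ncard (t := {(0 : ZMod (m + 1))}) ?_
        (Set.finite_singleton _)) (by simp)
      rintro x ⟨hx, hxe⟩
      simp only [hE1def, Set.mem_insert_iff, Set.mem_singleton_iff] at hxe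
      rcases hxe with rfl | rfl
      · exact Set.mem_singleton _
      · exact absurd ⟨h0, hx⟩ hB1
    · refine le_trans (Set.ncard_le_ncard (t := {((m : ℕ) : ZMod (m + 1))}) ?_
        (Set.finite_singleton _)) (by simp)
      rintro x ⟨hx, hxe⟩
      simp only [hE1def, Set.mem_insert_iff, Set.mem_singleton_iff] at hxe
      rcases hxe with rfl | rfl
      · exact absurd hx h0
      · exact Set.mem_singleton _
  have hcap2 : (S2 ∩ E2).ncard ≤ 1 := by
    by_cases h0 : (0 : ZMod (n - m + 1)) ∈ S2
    · refine le_trans (Set.ncard_le_ncard (t := {(0 : ZMod (n - m + 1))}) ?_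
        (Set.finite_singleton _)) (by simp)
      rintro x ⟨hx, hxe⟩
      simp only [hE2def, Set.mem_insert_iff, Set.mem_singleton_iff] at hxe
      rcases hxe with rfl | rfl
      · exact Set.mem_singleton _
      · exact absurd ⟨h0, hx⟩ hB2
    · refine le_trans (Set.ncard_le_ncard (t := {((n - m : ℕ) : ZMod (n - m + 1))}) ?_
        (Set.finite_singleton _)) (by simp)
      rintro x ⟨hx, hxe⟩
      simp only [hE2def, Set.mem_insert_iff, Set.mem_singleton_iff] at hxe
      rcases hxe with rfl | rfl
      · exact absurd hx h0
      · exact Set.mem_singleton _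
  have hsplit1 : S1.ncard ≤ (S1 \ E1).ncard + (S1 ∩ E1).ncard := by
    have h := congrArg Set.ncard (Set.diff_union_inter S1 E1)
    rw [← h]
    exact Set.ncard_union_le _ _
  have hsplit2 : S2.ncard ≤ (S2 \ E2).ncard + (S2 ∩ E2).ncard := by
    have h := congrArg Set.ncard (Set.diff_union_inter S2 E2)
    rw [← h]
    exact Set.ncard_union_le _ _
  have hcard1 : T1.ncard = (S1 \ E1).ncard := Set.ncard_image_of_injOn hinj1
  have hcard2 : T2.ncard = (S2 \ E2).ncard := Set.ncard_image_of_injOn hinj2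
  have hU : (T1 ∪ T2).ncard = T1.ncard + T2.ncard :=
    Set.ncard_union_eq hdisj (Set.toFinite _) (Set.toFinite _)
  have hUS : (T1 ∪ T2).ncard ≤ S.ncard :=
    Set.ncard_le_ncard (Set.union_subset hT1S hT2S) (Set.toFinite _)
  omega
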